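/- arXiv:1508.03569 — 2 statements merged into one kernel-verified Lean document; each statement's English description precedes it below -/
import Mathlib

section
/- Uniform L¹ law of large numbers for the jump rates (core of the one block estimate, Lemma 3.4): for every φ₀ > 0 there is a constant C = C(g, a, b, φ₀) such that for every finite set B, every environment p : B → [a,b] and every φ ∈ [0,φ₀], the product measure ν^{B,p}_φ := ⊗_{x∈B} ν¹_{φ/p_x} satisfies ∫ | (1/|B|)·Σ_{x∈B} (p_x·g(η(x)) − φ) | dν^{B,p}_φ(η) ≤ C/√|B|. (Here the random variables p_x·g(η(x)) are independent under ν^{B,p}_φ, each with mean φ.) -/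
open scoped BigOperators
open MeasureTheory

/-- The "generalized factorial" `g(n)! = g(1)·g(2)···g(n)`, with `g(0)! = 1`. -/
noncomputable def gfact (g : ℕ → ℝ) (n : ℕ) : ℝ := ∏ i ∈ Finset.Icc 1 n, g i

/-- The partition function `Z(φ) = Σ_{n≥0} φⁿ/g(n)!`. -/
noncomputable def Zfun (g : ℕ → ℝ) (φ : ℝ) : ℝ := ∑' n : ℕ, φ ^ n / gfact g n

/-- The one-site marginal `ν¹_φ(n) = φⁿ/(Z(φ)·g(n)!)`. -/
noncomputable def nu1 (g : ℕ → ℝ) (φ : ℝ) (n : ℕ) : ℝ := φ ^ n / (Zfun g φ * gfact g n)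

/-- The one-site marginal `ν¹_φ` as a measure on `ℕ`. -/
noncomputable def nuM (g : ℕ → ℝ) (φ : ℝ) : Measure ℕ :=
  Measure.sum fun n => (ENNReal.ofReal (nu1 g φ n)) • Measure.dirac n

section aux
variable {g : ℕ → ℝ} {g₀ gstar ψ ψm c : ℝ} {f : ℕ → ℝ}



lemma aux_sq_le (n : ℕ) : ((n:ℝ)^2 + 2) ≤ 3 * 2 ^ n := by
  induction n with
  | zero => norm_num
  | succ k ih =>
    have h1 : (1:ℝ) ≤ 2 ^ k := one_le_pow₀ (by norm_num)
    have h2 : (2:ℝ) * k ≤ (k:ℝ)^2 + 1 := by nlinarith [sq_nonneg ((k:ℝ) - 1)]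
    push_cast [pow_succ]
    nlinarith

lemma gfact_pos (hgpos : ∀ n, 1 ≤ n → 0 < g n) (n : ℕ) : 0 < gfact g n :=
  Finset.prod_pos fun i hi => hgpos i (Finset.mem_Icc.mp hi).1

lemma gfact_ge (hg₀ : 0 < g₀) (hlin : ∀ n, g₀ * n ≤ g n) (n : ℕ) :
    g₀ ^ n * (n.factorial : ℝ) ≤ gfact g n := by
  have h1 : (∏ i ∈ Finset.Icc 1 n, (g₀ * (i:ℝ))) ≤ gfact g n := by
    apply Finset.prod_le_prod
    · intro i hi; positivity
    · intro i _; exact hlin i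
  calc g₀ ^ n * (n.factorial : ℝ) = ∏ i ∈ Finset.Icc 1 n, (g₀ * (i:ℝ)) := by
        rw [Finset.prod_mul_distrib, Finset.prod_const, Nat.card_Icc]
        simp only [Nat.add_sub_cancel]
        congr 1
        rw [← Nat.cast_prod]
        congr 1
        rw [← Finset.Ico_add_one_right_eq_Icc, Finset.prod_Ico_id_eq_factorial]
    _ ≤ gfact g n := h1

lemma g_le (hgzero : g 0 = 0) (hLip : ∀ n, |g (n + 1) - g n| ≤ gstar) (n : ℕ) :
    g n ≤ gstar * n := by
  induction n with
  | zero => simp [hgzero]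
  | succ k ih =>
    have := abs_le.mp (hLip k)
    push_cast
    nlinarith



lemma base_le (hg₀ : 0 < g₀) (hgpos : ∀ n, 1 ≤ n → 0 < g n) (hlin : ∀ n, g₀ * n ≤ g n)
    (hψ : 0 ≤ ψ) (n : ℕ) : ψ ^ n / gfact g n ≤ (ψ / g₀) ^ n / n.factorial := by
  rw [div_pow, div_div]
  exact div_le_div_of_nonneg_left (by positivity) (by positivity) (gfact_ge hg₀ hlin n)

lemma summable_base (hg₀ : 0 < g₀) (hgpos : ∀ n, 1 ≤ n → 0 < g n) (hlin : ∀ n, g₀ * n ≤ g n)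
    (hψ : 0 ≤ ψ) : Summable fun n => ψ ^ n / gfact g n := by
  apply Summable.of_nonneg_of_le (fun n => by
      have := gfact_pos hgpos (g := g) n; positivity)
    (base_le hg₀ hgpos hlin hψ) (Real.summable_pow_div_factorial _)

lemma Zfun_ge_one (hg₀ : 0 < g₀) (hgpos : ∀ n, 1 ≤ n → 0 < g n) (hlin : ∀ n, g₀ * n ≤ g n)
    (hψ : 0 ≤ ψ) : 1 ≤ Zfun g ψ := by
  have h0 : ψ ^ 0 / gfact g 0 = 1 := by simp [gfact]
  rw [Zfun, ← h0]
  exact Summable.le_tsum (summable_base hg₀ hgpos hlin hψ) 0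
    (fun m _ => by have := gfact_pos hgpos (g := g) m; positivity)

lemma nu1_nonneg (hg₀ : 0 < g₀) (hgpos : ∀ n, 1 ≤ n → 0 < g n) (hlin : ∀ n, g₀ * n ≤ g n)
    (hψ : 0 ≤ ψ) (n : ℕ) : 0 ≤ nu1 g ψ n := by
  have hZ : 0 < Zfun g ψ := lt_of_lt_of_le one_pos (Zfun_ge_one hg₀ hgpos hlin hψ)
  have := gfact_pos hgpos (g := g) n
  unfold nu1; positivity

lemma nu1_le (hg₀ : 0 < g₀) (hgpos : ∀ n, 1 ≤ n → 0 < g n) (hlin : ∀ n, g₀ * n ≤ g n)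
    (hψ : 0 ≤ ψ) (n : ℕ) : nu1 g ψ n ≤ (ψ / g₀) ^ n / n.factorial := by
  have hZ : 1 ≤ Zfun g ψ := Zfun_ge_one hg₀ hgpos hlin hψ
  have hgf := gfact_pos hgpos (g := g) n
  calc nu1 g ψ n ≤ ψ ^ n / gfact g n := by
        unfold nu1
        exact div_le_div_of_nonneg_left (by positivity) hgf (by nlinarith)
    _ ≤ _ := base_le hg₀ hgpos hlin hψ n

lemma tsum_nu1 (hg₀ : 0 < g₀) (hgpos : ∀ n, 1 ≤ n → 0 < g n) (hlin : ∀ n, g₀ * n ≤ g n)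
    (hψ : 0 ≤ ψ) : ∑' n, nu1 g ψ n = 1 := by
  have hZ : 0 < Zfun g ψ := lt_of_lt_of_le one_pos (Zfun_ge_one hg₀ hgpos hlin hψ)
  have : ∀ n, nu1 g ψ n = (ψ ^ n / gfact g n) / Zfun g ψ := by
    intro n; unfold nu1; rw [div_div]; ring_nf
  simp_rw [this]
  rw [tsum_div_const]
  exact div_self hZ.ne'

lemma summable_nu1 (hg₀ : 0 < g₀) (hgpos : ∀ n, 1 ≤ n → 0 < g n) (hlin : ∀ n, g₀ * n ≤ g n)
    (hψ : 0 ≤ ψ) : Summable (nu1 g ψ) := by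
  apply Summable.of_nonneg_of_le (nu1_nonneg hg₀ hgpos hlin hψ)
    (nu1_le hg₀ hgpos hlin hψ) (Real.summable_pow_div_factorial _)



lemma nuM_singleton (n : ℕ) : nuM g ψ {n} = ENNReal.ofReal (nu1 g ψ n) := by
  rw [nuM, Measure.sum_apply _ (measurableSet_singleton n)]
  simp_rw [Measure.smul_apply, Measure.dirac_apply' _ (measurableSet_singleton n)]
  rw [tsum_eq_single n]
  · simp
  · intro m hmn
    simp [Set.indicator_of_notMem, hmn]

lemma isProb_nuM (hg₀ : 0 < g₀) (hgpos : ∀ n, 1 ≤ n → 0 < g n) (hlin : ∀ n, g₀ * n ≤ g n)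
    (hψ : 0 ≤ ψ) : IsProbabilityMeasure (nuM g ψ) := by
  constructor
  rw [nuM, Measure.sum_apply _ MeasurableSet.univ]
  simp only [Measure.smul_apply, Measure.dirac_apply' _ MeasurableSet.univ,
    Set.indicator_univ, Pi.one_apply, smul_eq_mul, mul_one]
  rw [← ENNReal.ofReal_tsum_of_nonneg (nu1_nonneg hg₀ hgpos hlin hψ)
    (summable_nu1 hg₀ hgpos hlin hψ), tsum_nu1 hg₀ hgpos hlin hψ, ENNReal.ofReal_one]

lemma integrable_nuM {f : ℕ → ℝ}
    (hg₀ : 0 < g₀) (hgpos : ∀ n, 1 ≤ n → 0 < g n) (hlin : ∀ n, g₀ * n ≤ g n)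
    (hψ : 0 ≤ ψ) (hs : Summable fun n => nu1 g ψ n * |f n|) :
    Integrable f (nuM g ψ) := by
  refine ⟨(measurable_from_top (f := f)).aestronglyMeasurable, ?_⟩
  rw [HasFiniteIntegral, lintegral_countable' _]
  have heq : ∀ n : ℕ, ‖f n‖ₑ * nuM g ψ {n} = ENNReal.ofReal (nu1 g ψ n * |f n|) := by
    intro n
    rw [nuM_singleton, ENNReal.ofReal_mul (nu1_nonneg hg₀ hgpos hlin hψ n), mul_comm]
    congr 1
    exact Real.enorm_eq_ofReal_abs _
  simp_rw [heq]
  rw [← ENNReal.ofReal_tsum_of_nonneg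
    (fun n => mul_nonneg (nu1_nonneg hg₀ hgpos hlin hψ n) (abs_nonneg _)) hs]
  exact ENNReal.ofReal_lt_top

lemma integral_nuM {f : ℕ → ℝ}
    (hg₀ : 0 < g₀) (hgpos : ∀ n, 1 ≤ n → 0 < g n) (hlin : ∀ n, g₀ * n ≤ g n)
    (hψ : 0 ≤ ψ) (hf : Integrable f (nuM g ψ)) :
    ∫ n, f n ∂(nuM g ψ) = ∑' n, nu1 g ψ n * f n := by
  rw [integral_countable' hf]
  congr 1; ext n
  rw [measureReal_def, nuM_singleton, ENNReal.toReal_ofReal (nu1_nonneg hg₀ hgpos hlin hψ n), smul_eq_mul]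


lemma summable_poly {x : ℝ} (hx : 0 ≤ x) :
    Summable fun n : ℕ => ((n:ℝ)^2 + 1) * (x ^ n / n.factorial) := by
  apply Summable.of_nonneg_of_le (fun n => by positivity)
    (fun n => ?_) ((Real.summable_pow_div_factorial (2*x)).mul_left 3)
  have h1 : ((n:ℝ)^2 + 1) ≤ 3 * 2 ^ n := le_trans (by nlinarith) (aux_sq_le n)
  have h2 : (0:ℝ) < n.factorial := by positivity
  rw [mul_pow]
  rw [div_eq_mul_inv, div_eq_mul_inv]
  have : ((n:ℝ)^2+1) * (x ^ n * (n.factorial:ℝ)⁻¹) ≤ (3 * 2^n) * (x^n * (n.factorial:ℝ)⁻¹) := by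
    apply mul_le_mul_of_nonneg_right h1 (by positivity)
  calc ((n:ℝ)^2+1) * (x ^ n * (n.factorial:ℝ)⁻¹) ≤ (3 * 2^n) * (x^n * (n.factorial:ℝ)⁻¹) := this
    _ = 3 * (2^n * x^n * (n.factorial:ℝ)⁻¹) := by ring

/-- master bound: `nu1 ψ n * (n²+1) ≤ (n²+1) (ψm/g₀)ⁿ/n!` and summability. -/
lemma nu1_poly_le (hg₀ : 0 < g₀) (hgpos : ∀ n, 1 ≤ n → 0 < g n) (hlin : ∀ n, g₀ * n ≤ g n)
    (hψ : 0 ≤ ψ) (hψm : ψ ≤ ψm) (n : ℕ) :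
    nu1 g ψ n * ((n:ℝ)^2 + 1) ≤ ((n:ℝ)^2 + 1) * ((ψm / g₀) ^ n / n.factorial) := by
  rw [mul_comm]
  apply mul_le_mul_of_nonneg_left _ (by positivity)
  calc nu1 g ψ n ≤ (ψ / g₀) ^ n / n.factorial := nu1_le hg₀ hgpos hlin hψ n
    _ ≤ (ψm / g₀) ^ n / n.factorial := by
        gcongr


lemma summable_nu1_poly (hg₀ : 0 < g₀) (hgpos : ∀ n, 1 ≤ n → 0 < g n) (hlin : ∀ n, g₀ * n ≤ g n)
    (hψ : 0 ≤ ψ) : Summable fun n => nu1 g ψ n * ((n:ℝ)^2 + 1) := by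
  apply Summable.of_nonneg_of_le
    (fun n => mul_nonneg (nu1_nonneg hg₀ hgpos hlin hψ n) (by positivity))
    (nu1_poly_le hg₀ hgpos hlin hψ le_rfl) (summable_poly (by positivity))

lemma tsum_nu1_poly_le (hg₀ : 0 < g₀) (hgpos : ∀ n, 1 ≤ n → 0 < g n) (hlin : ∀ n, g₀ * n ≤ g n)
    (hψ : 0 ≤ ψ) (hψm : ψ ≤ ψm) :
    ∑' n, nu1 g ψ n * ((n:ℝ)^2 + 1) ≤ ∑' n : ℕ, ((n:ℝ)^2 + 1) * ((ψm / g₀) ^ n / n.factorial) :=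
  Summable.tsum_le_tsum (nu1_poly_le hg₀ hgpos hlin hψ hψm) (summable_nu1_poly hg₀ hgpos hlin hψ)
    (summable_poly (by have := hψ.trans hψm; positivity))


lemma summable_nu1_mul (hg₀ : 0 < g₀) (hgpos : ∀ n, 1 ≤ n → 0 < g n) (hlin : ∀ n, g₀ * n ≤ g n)
    (hψ : 0 ≤ ψ) (hb : ∀ n, |f n| ≤ c * ((n:ℝ)^2 + 1)) :
    Summable fun n => nu1 g ψ n * |f n| := by
  apply Summable.of_nonneg_of_le
    (fun n => mul_nonneg (nu1_nonneg hg₀ hgpos hlin hψ n) (abs_nonneg _))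
    (fun n => ?_) ((summable_nu1_poly hg₀ hgpos hlin hψ).mul_left c)
  calc nu1 g ψ n * |f n| ≤ nu1 g ψ n * (c * ((n:ℝ)^2+1)) :=
        mul_le_mul_of_nonneg_left (hb n) (nu1_nonneg hg₀ hgpos hlin hψ n)
    _ = c * (nu1 g ψ n * ((n:ℝ)^2+1)) := by ring

lemma integrable_of_poly (hg₀ : 0 < g₀) (hgpos : ∀ n, 1 ≤ n → 0 < g n) (hlin : ∀ n, g₀ * n ≤ g n)
    (hψ : 0 ≤ ψ) (hb : ∀ n, |f n| ≤ c * ((n:ℝ)^2 + 1)) : Integrable f (nuM g ψ) :=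
  integrable_nuM hg₀ hgpos hlin hψ (summable_nu1_mul hg₀ hgpos hlin hψ hb)

lemma integral_le_of_poly (hg₀ : 0 < g₀) (hgpos : ∀ n, 1 ≤ n → 0 < g n) (hlin : ∀ n, g₀ * n ≤ g n)
    (hψ : 0 ≤ ψ) (hψm : ψ ≤ ψm) (hb : ∀ n, |f n| ≤ c * ((n:ℝ)^2 + 1)) :
    ∫ n, f n ∂(nuM g ψ) ≤ c * ∑' n : ℕ, ((n:ℝ)^2 + 1) * ((ψm / g₀) ^ n / n.factorial) := by
  have hc : 0 ≤ c := by
    have := (abs_nonneg (f 0)).trans (hb 0); simpa using this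
  have hsum := summable_nu1_mul hg₀ hgpos hlin hψ hb
  have hsum' : Summable fun n => nu1 g ψ n * f n := by
    apply Summable.of_abs
    apply hsum.congr
    intro n
    rw [abs_mul, abs_of_nonneg (nu1_nonneg hg₀ hgpos hlin hψ n)]
  rw [integral_nuM hg₀ hgpos hlin hψ (integrable_of_poly hg₀ hgpos hlin hψ hb)]
  calc ∑' n, nu1 g ψ n * f n ≤ ∑' n, nu1 g ψ n * (c * ((n:ℝ)^2+1)) := by
        apply Summable.tsum_le_tsum _ hsum' (((summable_nu1_poly hg₀ hgpos hlin hψ).mul_left c).congr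
          (fun n => by ring))
        intro n
        exact mul_le_mul_of_nonneg_left ((le_abs_self _).trans (hb n))
          (nu1_nonneg hg₀ hgpos hlin hψ n)
    _ = c * ∑' n, nu1 g ψ n * ((n:ℝ)^2+1) := by
        rw [← tsum_mul_left]; congr 1; ext n; ring
    _ ≤ c * ∑' n : ℕ, ((n:ℝ)^2 + 1) * ((ψm / g₀) ^ n / n.factorial) :=
        mul_le_mul_of_nonneg_left (tsum_nu1_poly_le hg₀ hgpos hlin hψ hψm) hc

lemma mean_g (hg₀ : 0 < g₀) (hgpos : ∀ n, 1 ≤ n → 0 < g n) (hlin : ∀ n, g₀ * n ≤ g n)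
    (hgzero : g 0 = 0) (hgle : ∀ n, g n ≤ gstar * n) (hgs : 0 < gstar)
    (hψ : 0 ≤ ψ) : ∫ n, g n ∂(nuM g ψ) = ψ := by
  have hgnn : ∀ n : ℕ, 0 ≤ g n := by
    intro n; exact le_trans (by positivity) (hlin n)
  have hb : ∀ n : ℕ, |g n| ≤ gstar * ((n:ℝ)^2 + 1) := by
    intro n
    rw [abs_of_nonneg (hgnn n)]
    calc g n ≤ gstar * n := hgle n
      _ ≤ gstar * ((n:ℝ)^2+1) := by nlinarith [sq_nonneg ((n:ℝ)-1)]
  have hint := integrable_of_poly hg₀ hgpos hlin hψ hb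
  rw [integral_nuM hg₀ hgpos hlin hψ hint]
  have hsum : Summable fun n => nu1 g ψ n * g n := by
    apply Summable.of_abs
    apply (summable_nu1_mul hg₀ hgpos hlin hψ hb).congr
    intro n
    rw [abs_mul, abs_of_nonneg (nu1_nonneg hg₀ hgpos hlin hψ n)]
  rw [Summable.tsum_eq_zero_add hsum]
  have h0 : nu1 g ψ 0 * g 0 = 0 := by rw [hgzero, mul_zero]
  have hshift : ∀ n : ℕ, nu1 g ψ (n+1) * g (n+1) = ψ * nu1 g ψ n := by
    intro n
    have hgf : gfact g (n+1) = gfact g n * g (n+1) := by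
      rw [gfact, gfact, Finset.prod_Icc_succ_top (Nat.one_le_iff_ne_zero.mpr (Nat.succ_ne_zero n))]
    have hgpos' := hgpos (n+1) (Nat.le_add_left 1 n)
    have hgfn := gfact_pos hgpos (g := g) n
    have hZ : Zfun g ψ ≠ 0 :=
      ne_of_gt (lt_of_lt_of_le one_pos (Zfun_ge_one hg₀ hgpos hlin hψ))
    rw [nu1, nu1, hgf, pow_succ]
    field_simp
  simp_rw [h0, hshift, zero_add]
  rw [tsum_mul_left, tsum_nu1 hg₀ hgpos hlin hψ, mul_one]
end aux

section pi
variable {B : Type} [Fintype B] (ν : B → Measure ℕ) [hP : ∀ x, IsProbabilityMeasure (ν x)]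

lemma pi_prod_int (F : B → ℕ → ℝ) (hF : ∀ x, Integrable (F x) (ν x)) :
    Integrable (fun η : B → ℕ => ∏ i, F i (η i)) (Measure.pi ν)
    ∧ ∫ η : B → ℕ, ∏ i, F i (η i) ∂(Measure.pi ν) = ∏ i, ∫ n, F i n ∂(ν i) := by
  letI inst : ∀ x : B, MeasureSpace ℕ := fun x => MeasureSpace.mk (ν x)
  letI hSF : ∀ x : B, @SigmaFinite ℕ _ (@volume ℕ (inst x)) := fun x =>
    (inferInstance : SigmaFinite (ν x))
  constructor
  · exact MeasureTheory.Integrable.fintype_prod_dep hF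
  · exact MeasureTheory.integral_fintype_prod_eq_prod F

lemma pi_single (x : B) (K : ℕ → ℝ) (hK : Integrable K (ν x)) :
    Integrable (fun η : B → ℕ => K (η x)) (Measure.pi ν)
    ∧ ∫ η : B → ℕ, K (η x) ∂(Measure.pi ν) = ∫ n, K n ∂(ν x) := by
  classical
  set F : B → ℕ → ℝ := fun i => if i = x then K else fun _ => 1 with hFdef
  have hF : ∀ i, Integrable (F i) (ν i) := by
    intro i
    by_cases h : i = x
    · subst h; simpa [hFdef] using hK
    · simpa [hFdef, h] using (integrable_const (1:ℝ) (μ := ν i))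
  have hprod : ∀ η : B → ℕ, ∏ i, F i (η i) = K (η x) := by
    intro η
    rw [Finset.prod_eq_single x (fun i _ hne => by simp [hFdef, hne]) (fun h => absurd (Finset.mem_univ x) h)]
    simp [hFdef]
  have h := pi_prod_int ν F hF
  constructor
  · exact h.1.congr (Filter.Eventually.of_forall fun η => hprod η)
  · have h2 : ∏ i, ∫ n, F i n ∂(ν i) = ∫ n, K n ∂(ν x) := by
      rw [Finset.prod_eq_single x (fun i _ hne => by simp [hFdef, hne]) (fun h => absurd (Finset.mem_univ x) h)]
      simp [hFdef]
    rw [← h2, ← h.2]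
    exact integral_congr_ae (Filter.Eventually.of_forall fun η => hprod η) |>.symm ▸ rfl

lemma pi_pair {x y : B} (hxy : x ≠ y) (K L : ℕ → ℝ)
    (hK : Integrable K (ν x)) (hL : Integrable L (ν y)) :
    Integrable (fun η : B → ℕ => K (η x) * L (η y)) (Measure.pi ν)
    ∧ ∫ η : B → ℕ, K (η x) * L (η y) ∂(Measure.pi ν)
      = (∫ n, K n ∂(ν x)) * ∫ n, L n ∂(ν y) := by
  classical
  set F : B → ℕ → ℝ := fun i => if i = x then K else if i = y then L else fun _ => 1 with hFdef
  have hF : ∀ i, Integrable (F i) (ν i) := by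
    intro i
    by_cases h : i = x
    · subst h; simpa [hFdef] using hK
    · by_cases h' : i = y
      · subst h'; simpa [hFdef, h] using hL
      · simpa [hFdef, h, h'] using (integrable_const (1:ℝ) (μ := ν i))
  have key : ∀ G : B → ℕ, ∏ i, (if i = x then K else if i = y then L else fun _ => 1) (G i)
      = (K (G x)) * (L (G y)) := by
    intro G
    rw [← Finset.prod_subset (Finset.subset_univ ({x, y} : Finset B))
      (fun i _ hi => ?_), Finset.prod_pair hxy]
    · simp [hxy, Ne.symm hxy]
    · have hix : i ≠ x := fun h => hi (by simp [h])
      have hiy : i ≠ y := fun h => hi (by simp [h])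
      simp [hix, hiy]
  have h := pi_prod_int ν F hF
  have hprod : ∀ η : B → ℕ, ∏ i, F i (η i) = K (η x) * L (η y) := fun η => key (fun i => η i)
  refine ⟨h.1.congr (Filter.Eventually.of_forall fun η => hprod η), ?_⟩
  have h2 : ∏ i, ∫ n, F i n ∂(ν i) = (∫ n, K n ∂(ν x)) * ∫ n, L n ∂(ν y) := by
    rw [← Finset.prod_subset (Finset.subset_univ ({x, y} : Finset B))
      (fun i _ hi => ?_), Finset.prod_pair hxy]
    · simp [hFdef, hxy, Ne.symm hxy]
    · have hix : i ≠ x := fun h => hi (by simp [h])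
      have hiy : i ≠ y := fun h => hi (by simp [h])
      simp [hFdef, hix, hiy]
  rw [← h2, ← h.2]
  exact integral_congr_ae (Filter.Eventually.of_forall fun η => (hprod η).symm)

end pi

set_option maxHeartbeats 2000000 in
/-- Uniform L¹ law of large numbers for the jump rates. -/
theorem uniform_L1_LLN_jump_rates
    (g : ℕ → ℝ) (g₀ gstar : ℝ) (hg₀ : 0 < g₀) (hgs : g₀ ≤ gstar)
    (hgzero : g 0 = 0) (hgpos : ∀ n, 1 ≤ n → 0 < g n)
    (hLip : ∀ n, |g (n + 1) - g n| ≤ gstar)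
    (hlin : ∀ n, g₀ * n ≤ g n)
    (a b : ℝ) (ha : 0 < a) (hab : a < b)
    (φ₀ : ℝ) (hφ₀ : 0 < φ₀) :
    ∃ C : ℝ, ∀ (B : Type) [Fintype B] (p : B → ℝ), (∀ x, p x ∈ Set.Icc a b) →
      ∀ φ ∈ Set.Icc (0 : ℝ) φ₀,
      ∫ η, |(1 / (Fintype.card B : ℝ)) * ∑ x, (p x * g (η x) - φ)|
          ∂(Measure.pi fun x => nuM g (φ / p x)) ≤
        C / Real.sqrt (Fintype.card B) := by
  classical
  have hb0 : 0 < b := ha.trans hab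
  have hgs0 : 0 < gstar := lt_of_lt_of_le hg₀ hgs
  set ψm : ℝ := φ₀ / a with hψmdef
  have hψm0 : 0 ≤ ψm := by positivity
  set Mval : ℝ := ∑' n : ℕ, ((n:ℝ)^2 + 1) * ((ψm / g₀) ^ n / n.factorial) with hMdef
  have hMnn : 0 ≤ Mval := tsum_nonneg (fun n => by positivity)
  set c₁ : ℝ := b * gstar + φ₀ with hc₁def
  have hc₁0 : 0 < c₁ := by positivity
  set Vv : ℝ := 2 * c₁^2 * Mval + 1 with hVdef
  have hVpos : 0 < Vv := by positivity
  refine ⟨Real.sqrt Vv, ?_⟩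
  intro B _ p hp φ hφ
  have hgle : ∀ n : ℕ, g n ≤ gstar * n := g_le hgzero hLip
  have hgnn : ∀ n : ℕ, 0 ≤ g n := fun n => le_trans (by positivity) (hlin n)
  have hpx : ∀ x, 0 < p x := fun x => lt_of_lt_of_le ha (hp x).1
  have hψ0 : ∀ x, 0 ≤ φ / p x := fun x => div_nonneg hφ.1 (hpx x).le
  have hψle : ∀ x, φ / p x ≤ ψm := fun x => div_le_div₀ hφ₀.le hφ.2 ha (hp x).1
  set ν : B → Measure ℕ := fun x => nuM g (φ / p x) with hνdef
  haveI hPB : ∀ x, IsProbabilityMeasure (ν x) := fun x => isProb_nuM hg₀ hgpos hlin (hψ0 x)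
  set μ : Measure (B → ℕ) := Measure.pi ν with hμdef
  haveI : IsProbabilityMeasure μ := by
    rw [hμdef]; infer_instance
  set f : B → ℕ → ℝ := fun x n => p x * g n - φ with hfdef
  have hlinb : ∀ x (n : ℕ), |f x n| ≤ c₁ * ((n:ℝ) + 1) := by
    intro x n
    rw [abs_le]
    have h1 : 0 ≤ g n := hgnn n
    have h2 : g n ≤ gstar * n := hgle n
    have h3 : a ≤ p x := (hp x).1
    have h4 : p x ≤ b := (hp x).2
    have h5 : 0 ≤ φ := hφ.1
    have h6 : φ ≤ φ₀ := hφ.2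
    have h7 : (0:ℝ) ≤ n := Nat.cast_nonneg n
    have h8 : p x * g n ≤ b * (gstar * (n:ℝ)) := by nlinarith
    have h9 : 0 ≤ p x * g n := mul_nonneg (by linarith) h1
    have h10 : 0 ≤ b * gstar := by positivity
    constructor <;> simp only [hfdef, hc₁def] <;> nlinarith [mul_nonneg h10 h7, mul_nonneg hφ₀.le h7]
  have hbnd1 : ∀ x (n : ℕ), |f x n| ≤ c₁ * ((n:ℝ)^2 + 1) := by
    intro x n
    refine (hlinb x n).trans ?_
    have hnn : (n:ℝ) ≤ (n:ℝ)^2 := by exact_mod_cast Nat.le_self_pow two_ne_zero n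
    nlinarith [mul_le_mul_of_nonneg_left hnn hc₁0.le]
  have hbnd2 : ∀ x (n : ℕ), |f x n * f x n| ≤ (2 * c₁^2) * ((n:ℝ)^2 + 1) := by
    intro x n
    rw [abs_mul]
    have h7 : (0:ℝ) ≤ n := Nat.cast_nonneg n
    have := hlinb x n
    have habs : 0 ≤ |f x n| := abs_nonneg _
    nlinarith [sq_nonneg ((n:ℝ) - 1), sq_nonneg ((n:ℝ) + 1)]
  have hint : ∀ x, Integrable (f x) (ν x) := fun x =>
    integrable_of_poly hg₀ hgpos hlin (hψ0 x) (hbnd1 x)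
  have hint2 : ∀ x, Integrable (fun n => f x n * f x n) (ν x) := fun x =>
    integrable_of_poly hg₀ hgpos hlin (hψ0 x) (hbnd2 x)
  have hintg : ∀ x, Integrable g (ν x) := by
    intro x
    apply integrable_of_poly hg₀ hgpos hlin (hψ0 x) (c := gstar)
    intro n
    rw [abs_of_nonneg (hgnn n)]
    have h7 : (0:ℝ) ≤ n := Nat.cast_nonneg n
    nlinarith [sq_nonneg ((n:ℝ) - 1), hgle n]
  have hmean : ∀ x, ∫ n, f x n ∂(ν x) = 0 := by
    intro x
    have : ∫ n, f x n ∂(ν x) = p x * (∫ n, g n ∂(ν x)) - φ := by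
      rw [hfdef]
      rw [integral_sub ((hintg x).const_mul (p x)) (integrable_const φ)]
      rw [integral_const_mul, integral_const]
      simp [measure_univ]
    rw [this, mean_g hg₀ hgpos hlin hgzero hgle hgs0 (hψ0 x)]
    have hne : p x ≠ 0 := (hpx x).ne'
    field_simp
    ring
  have hsq : ∀ x, ∫ n, f x n * f x n ∂(ν x) ≤ 2 * c₁^2 * Mval := by
    intro x
    have := integral_le_of_poly hg₀ hgpos hlin (hψ0 x) (hψle x) (hbnd2 x)
    rw [hMdef]
    linarith
  -- pi level
  have hSx : ∀ x, Integrable (fun η : B → ℕ => f x (η x)) μ := fun x =>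
    (pi_single ν x _ (hint x)).1
  have hS : Integrable (fun η : B → ℕ => ∑ x, f x (η x)) μ :=
    integrable_finset_sum _ (fun x _ => hSx x)
  have hterm : ∀ x y : B, Integrable (fun η : B → ℕ => f x (η x) * f y (η y)) μ := by
    intro x y
    by_cases hxy : x = y
    · subst hxy
      exact (pi_single ν x (fun n => f x n * f x n) (hint2 x)).1
    · exact (pi_pair ν hxy (f x) (f y) (hint x) (hint y)).1
  have htermval : ∀ x y : B, x ≠ y → ∫ η, f x (η x) * f y (η y) ∂μ = 0 := by
    intro x y hxy
    rw [(pi_pair ν hxy (f x) (f y) (hint x) (hint y)).2, hmean x, zero_mul]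
  have hfun : (fun η : B → ℕ => (∑ x, f x (η x)) * (∑ y, f y (η y)))
      = fun η => ∑ x, ∑ y, f x (η x) * f y (η y) := by
    funext η
    rw [Finset.sum_mul_sum]
  have hS2 : Integrable (fun η : B → ℕ => (∑ x, f x (η x)) * (∑ y, f y (η y))) μ := by
    rw [hfun]
    exact integrable_finset_sum _ (fun x _ => integrable_finset_sum _ (fun y _ => hterm x y))
  have hS2val : ∫ η, (∑ x, f x (η x)) * (∑ y, f y (η y)) ∂μ
      ≤ (Fintype.card B : ℝ) * (2 * c₁^2 * Mval) := by
    rw [hfun]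
    rw [integral_finset_sum _ (fun x _ => integrable_finset_sum _ (fun y _ => hterm x y))]
    have hinner : ∀ x : B, ∫ η, ∑ y, f x (η x) * f y (η y) ∂μ
        = ∫ n, f x n * f x n ∂(ν x) := by
      intro x
      rw [integral_finset_sum _ (fun y _ => hterm x y)]
      rw [Finset.sum_eq_single_of_mem x (Finset.mem_univ x)
        (fun y _ hyx => htermval x y (Ne.symm hyx))]
      exact (pi_single ν x (fun n => f x n * f x n) (hint2 x)).2
    calc ∑ x : B, ∫ η, ∑ y, f x (η x) * f y (η y) ∂μ
        = ∑ x : B, ∫ n, f x n * f x n ∂(ν x) := Finset.sum_congr rfl (fun x _ => hinner x)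
      _ ≤ ∑ _x : B, 2 * c₁^2 * Mval := Finset.sum_le_sum (fun x _ => hsq x)
      _ = (Fintype.card B : ℝ) * (2 * c₁^2 * Mval) := by
          rw [Finset.sum_const, Finset.card_univ, nsmul_eq_mul]
  -- conclusion
  clear_value ψm Mval c₁ Vv
  rcases Nat.eq_zero_or_pos (Fintype.card B) with hN | hN
  · simp [hN]
  · have hN0 : (0:ℝ) < (Fintype.card B : ℝ) := by exact_mod_cast hN
    set N : ℝ := (Fintype.card B : ℝ) with hNdef
    set ε : ℝ := Real.sqrt (N * Vv) with hεdef
    have hεpos : 0 < ε := Real.sqrt_pos.mpr (mul_pos hN0 hVpos)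
    have hεsq : ε * ε = N * Vv := Real.mul_self_sqrt (mul_pos hN0 hVpos).le
    clear_value ε
    have hgoal1 : ∀ η : B → ℕ, |(1 / N) * ∑ x, (p x * g (η x) - φ)|
        = (1/N) * |∑ x, f x (η x)| := by
      intro η
      rw [abs_mul, abs_of_nonneg (by positivity : (0:ℝ) ≤ 1/N)]
    calc ∫ η, |(1 / N) * ∑ x, (p x * g (η x) - φ)| ∂μ
        = ∫ η, (1/N) * |∑ x, f x (η x)| ∂μ := by
          apply integral_congr_ae
          exact Filter.Eventually.of_forall hgoal1
      _ = (1/N) * ∫ η, |∑ x, f x (η x)| ∂μ := integral_const_mul _ _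
      _ ≤ (1/N) * ε := by
          apply mul_le_mul_of_nonneg_left _ (by positivity)
          have hptw : ∀ η : B → ℕ, |∑ x, f x (η x)|
              ≤ (ε + ((∑ x, f x (η x)) * (∑ y, f y (η y)))/ε)/2 := by
            intro η
            set s := ∑ x, f x (η x) with hsdef
            have h2 : |s| * |s| = s * s := abs_mul_abs_self s
            rw [← sub_nonneg]
            have h3 : (ε + s * s/ε)/2 - |s| = (|s| - ε)^2 / (2*ε) := by
              field_simp
              nlinarith [h2]
            rw [h3]
            positivity
          have hrhs_int : Integrable
              (fun η : B → ℕ => (ε + ((∑ x, f x (η x)) * (∑ y, f y (η y)))/ε)/2) μ :=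
            ((integrable_const ε).add (hS2.div_const ε)).div_const 2
          have step1 : ∫ η, |∑ x, f x (η x)| ∂μ
              ≤ ∫ η, (ε + ((∑ x, f x (η x)) * (∑ y, f y (η y)))/ε)/2 ∂μ :=
            integral_mono hS.abs hrhs_int hptw
          have step2 : ∫ η, (ε + ((∑ x, f x (η x)) * (∑ y, f y (η y)))/ε)/2 ∂μ
              = (ε + (∫ η, (∑ x, f x (η x)) * (∑ y, f y (η y)) ∂μ)/ε)/2 := by
            rw [integral_div, integral_add (integrable_const ε) (hS2.div_const ε),
              integral_const, integral_div]
            simp [measure_univ]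
          have step3 : (ε + (∫ η, (∑ x, f x (η x)) * (∑ y, f y (η y)) ∂μ)/ε)/2 ≤ ε := by
            have hle : ∫ η, (∑ x, f x (η x)) * (∑ y, f y (η y)) ∂μ ≤ N * Vv := by
              refine hS2val.trans ?_
              rw [hVdef]
              nlinarith
            have h4 : (∫ η, (∑ x, f x (η x)) * (∑ y, f y (η y)) ∂μ)/ε ≤ (N*Vv)/ε := by
              gcongr
            have h6 : (N*Vv)/ε = ε := by
              rw [← hεsq, mul_div_assoc, div_self hεpos.ne', mul_one]
            linarith
          linarith [step1, step2.le, step3]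
      _ ≤ Real.sqrt Vv / Real.sqrt N := by
          have h2 : Real.sqrt N * Real.sqrt N = N := Real.mul_self_sqrt hN0.le
          have hsN : Real.sqrt N ≠ 0 := Real.sqrt_ne_zero'.mpr hN0
          have heq : (1/N) * ε = Real.sqrt Vv / Real.sqrt N := by
            rw [hεdef, Real.sqrt_mul hN0.le]
            field_simp
            linear_combination h2
          exact le_of_eq heq
end

section
/- Uniform fugacity bound: let S be a nonempty finite set, p : S → [a,b], A > 0, and φ ≥ 0. If the average grand-canonical density satisfies (1/|S|)·Σ_{x∈S} M(φ/p_x) ≤ A, then φ ≤ g*·b·A. -/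
open scoped BigOperators

/-- The mean density `M(φ) = Σ_{n≥0} n·ν¹_φ(n)`. -/
noncomputable def Mfun (g : ℕ → ℝ) (φ : ℝ) : ℝ := ∑' n : ℕ, (n : ℝ) * nu1 g φ n

lemma gfact_succ (g : ℕ → ℝ) (n : ℕ) : gfact g (n + 1) = gfact g n * g (n + 1) := by
  unfold gfact
  rw [Finset.prod_Icc_succ_top (Nat.le_add_left 1 n)]

lemma key_lemma (g : ℕ → ℝ) (g₀ gstar : ℝ) (hg₀ : 0 < g₀) (hgs : g₀ ≤ gstar)
    (hgzero : g 0 = 0) (hgpos : ∀ n, 1 ≤ n → 0 < g n)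
    (hLip : ∀ n, |g (n + 1) - g n| ≤ gstar)
    (hlin : ∀ n, g₀ * n ≤ g n)
    (ψ : ℝ) (hψ : 0 ≤ ψ) : ψ ≤ gstar * Mfun g ψ := by
  have hgspos : 0 < gstar := lt_of_lt_of_le hg₀ hgs
  have hgfpos : ∀ n, 0 < gfact g n := by
    intro n
    induction n with
    | zero => simp [gfact]
    | succ k ih =>
      rw [gfact_succ]
      exact mul_pos ih (hgpos _ (Nat.le_add_left 1 k))
  have hgflow : ∀ n, g₀ ^ n * (n.factorial : ℝ) ≤ gfact g n := by
    intro n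
    induction n with
    | zero => simp [gfact]
    | succ k ih =>
      rw [gfact_succ]
      have h1 : g₀ * ((k : ℝ) + 1) ≤ g (k + 1) := by
        have := hlin (k + 1); push_cast at this ⊢; linarith
      have hcast : (Nat.factorial (k + 1) : ℝ) = (k.factorial : ℝ) * ((k : ℝ) + 1) := by
        rw [Nat.factorial_succ]; push_cast; ring
      have hnn : (0:ℝ) ≤ g₀ ^ k * (k.factorial : ℝ) := by positivity
      calc g₀ ^ (k+1) * ((k+1).factorial : ℝ)
          = (g₀ ^ k * (k.factorial : ℝ)) * (g₀ * ((k : ℝ) + 1)) := by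
            rw [hcast]; ring_nf
        _ ≤ gfact g k * g (k + 1) := by
            apply mul_le_mul ih h1 (by positivity) (hgfpos k).le
  have hZterm_le : ∀ n, ψ ^ n / gfact g n ≤ (ψ / g₀) ^ n / n.factorial := by
    intro n
    have h := hgflow n
    have h2 : ψ ^ n / gfact g n ≤ ψ ^ n / (g₀ ^ n * (n.factorial : ℝ)) := by
      exact div_le_div_of_nonneg_left (by positivity) (by positivity) (hgflow n)
    calc ψ ^ n / gfact g n ≤ ψ ^ n / (g₀ ^ n * (n.factorial : ℝ)) := h2
      _ = (ψ / g₀) ^ n / n.factorial := by rw [div_pow, div_div]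
  have hZsum : Summable (fun n => ψ ^ n / gfact g n) :=
    Summable.of_nonneg_of_le (fun n => div_nonneg (by positivity) (hgfpos n).le) hZterm_le
      (Real.summable_pow_div_factorial (ψ / g₀))
  have hZ1 : 1 ≤ Zfun g ψ := by
    have h0 : ψ ^ 0 / gfact g 0 = 1 := by simp [gfact]
    have := Summable.le_tsum hZsum 0 (fun i _ => div_nonneg (by positivity) (hgfpos i).le)
    rw [h0] at this
    exact this
  have hZpos : 0 < Zfun g ψ := lt_of_lt_of_le one_pos hZ1
  have hnu_eq : ∀ n, nu1 g ψ n = (1 / Zfun g ψ) * (ψ ^ n / gfact g n) := by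
    intro n
    unfold nu1
    field_simp
  have hnu_sum : Summable (nu1 g ψ) := by
    have : nu1 g ψ = fun n => (1 / Zfun g ψ) * (ψ ^ n / gfact g n) := funext hnu_eq
    rw [this]
    exact hZsum.mul_left _
  have hnu_tsum : ∑' n, nu1 g ψ n = 1 := by
    calc ∑' n, nu1 g ψ n = ∑' n, (1 / Zfun g ψ) * (ψ ^ n / gfact g n) := tsum_congr hnu_eq
      _ = (1 / Zfun g ψ) * Zfun g ψ := by rw [tsum_mul_left]; rfl
      _ = 1 := by field_simp
  have hnu_nonneg : ∀ n, 0 ≤ nu1 g ψ n := by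
    intro n; unfold nu1
    have := hZpos
    have := hgfpos n
    positivity
  have hglip' : ∀ n, g n ≤ gstar * n := by
    intro n
    induction n with
    | zero => simp [hgzero]
    | succ k ih =>
      have h := abs_le.mp (hLip k)
      push_cast
      nlinarith [h.2]
  have hMterm_le : ∀ n : ℕ, (n : ℝ) * (ψ ^ n / gfact g n) ≤ (2 * ψ / g₀) ^ n / n.factorial := by
    intro n
    have h1 : (n : ℝ) ≤ 2 ^ n := by exact_mod_cast (Nat.lt_two_pow_self (n := n)).le
    calc (n : ℝ) * (ψ ^ n / gfact g n)
        ≤ 2 ^ n * ((ψ / g₀) ^ n / n.factorial) := by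
          apply mul_le_mul h1 (hZterm_le n) (div_nonneg (by positivity) (hgfpos n).le)
            (by positivity)
      _ = (2 * ψ / g₀) ^ n / n.factorial := by
          rw [mul_div_assoc 2 ψ g₀, mul_pow, mul_div_assoc]
  have hMsum' : Summable (fun n : ℕ => (n : ℝ) * (ψ ^ n / gfact g n)) :=
    Summable.of_nonneg_of_le
      (fun n => mul_nonneg (Nat.cast_nonneg n) (div_nonneg (by positivity) (hgfpos n).le))
      hMterm_le
      (Real.summable_pow_div_factorial _)
  have hMsum : Summable (fun n : ℕ => (n : ℝ) * nu1 g ψ n) := by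
    have : (fun n : ℕ => (n : ℝ) * nu1 g ψ n)
        = fun n : ℕ => (1 / Zfun g ψ) * ((n : ℝ) * (ψ ^ n / gfact g n)) := by
      funext n; rw [hnu_eq]; ring
    rw [this]
    exact hMsum'.mul_left _
  have hstep : ∀ n, ψ * nu1 g ψ n = g (n + 1) * nu1 g ψ (n + 1) := by
    intro n
    unfold nu1
    rw [gfact_succ]
    have h1 := (hgfpos n).ne'
    have h2 := (hgpos (n + 1) (Nat.le_add_left 1 n)).ne'
    have hZ := hZpos.ne'
    field_simp
    ring
  have h1 : ψ = ∑' n, g (n + 1) * nu1 g ψ (n + 1) := by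
    calc ψ = ψ * ∑' n, nu1 g ψ n := by rw [hnu_tsum, mul_one]
      _ = ∑' n, ψ * nu1 g ψ n := tsum_mul_left.symm
      _ = ∑' n, g (n + 1) * nu1 g ψ (n + 1) := tsum_congr hstep
  have hsum_shift : Summable (fun n => ((n + 1 : ℕ) : ℝ) * nu1 g ψ (n + 1)) := by
    exact (hMsum.comp_injective Nat.succ_injective).congr fun n => by
      simp [Function.comp, Nat.succ_eq_add_one]
  have hleft_sum : Summable (fun n => g (n + 1) * nu1 g ψ (n + 1)) := by
    have : (fun n => g (n + 1) * nu1 g ψ (n + 1)) = fun n => ψ * nu1 g ψ n :=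
      funext fun n => (hstep n).symm
    rw [this]
    exact hnu_sum.mul_left _
  have h2 : ∑' n, g (n + 1) * nu1 g ψ (n + 1)
      ≤ gstar * ∑' n, ((n + 1 : ℕ) : ℝ) * nu1 g ψ (n + 1) := by
    rw [← tsum_mul_left]
    apply Summable.tsum_le_tsum _ hleft_sum (hsum_shift.mul_left _)
    intro n
    have hgl := hglip' (n + 1)
    have hn := hnu_nonneg (n + 1)
    have : g (n + 1) ≤ gstar * ((n + 1 : ℕ) : ℝ) := hgl
    calc g (n + 1) * nu1 g ψ (n + 1) ≤ (gstar * ((n + 1 : ℕ) : ℝ)) * nu1 g ψ (n + 1) :=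
          mul_le_mul_of_nonneg_right this hn
      _ = gstar * (((n + 1 : ℕ) : ℝ) * nu1 g ψ (n + 1)) := by ring
  have h3 : ∑' n, ((n + 1 : ℕ) : ℝ) * nu1 g ψ (n + 1) = Mfun g ψ := by
    unfold Mfun
    rw [Summable.tsum_eq_zero_add hMsum]
    simp
  rw [← h3]
  calc ψ = ∑' n, g (n + 1) * nu1 g ψ (n + 1) := h1
    _ ≤ gstar * ∑' n, ((n + 1 : ℕ) : ℝ) * nu1 g ψ (n + 1) := h2

/-- Uniform fugacity bound: if the average grand-canonical density over a nonempty
finite set `S` with environment `p : S → [a,b]` satisfies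
`(1/|S|)·Σ_{x∈S} M(φ/p_x) ≤ A`, then `φ ≤ g*·b·A`. -/
theorem uniform_fugacity_bound
    (g : ℕ → ℝ) (g₀ gstar : ℝ) (hg₀ : 0 < g₀) (hgs : g₀ ≤ gstar)
    (hgzero : g 0 = 0) (hgpos : ∀ n, 1 ≤ n → 0 < g n)
    (hLip : ∀ n, |g (n + 1) - g n| ≤ gstar)
    (hlin : ∀ n, g₀ * n ≤ g n)
    (a b : ℝ) (ha : 0 < a) (hab : a < b)
    (S : Type) [Fintype S] [Nonempty S]
    (p : S → ℝ) (hp : ∀ x, p x ∈ Set.Icc a b)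
    (A φ : ℝ) (hA : 0 < A) (hφ : 0 ≤ φ)
    (havg : (1 / (Fintype.card S : ℝ)) * ∑ x : S, Mfun g (φ / p x) ≤ A) :
    φ ≤ gstar * b * A := by
  have hgspos : 0 < gstar := lt_of_lt_of_le hg₀ hgs
  have hb : 0 < b := lt_trans ha hab
  have hcard : 0 < (Fintype.card S : ℝ) := by
    exact_mod_cast Fintype.card_pos
  have hM : ∀ x, φ / (gstar * b) ≤ Mfun g (φ / p x) := by
    intro x
    obtain ⟨hpa, hpb⟩ := hp x
    have hpx : 0 < p x := lt_of_lt_of_le ha hpa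
    have hψ : 0 ≤ φ / p x := div_nonneg hφ hpx.le
    have hk := key_lemma g g₀ gstar hg₀ hgs hgzero hgpos hLip hlin (φ / p x) hψ
    have hdb : φ / b ≤ φ / p x := by gcongr
    have h1 : φ / b ≤ gstar * Mfun g (φ / p x) := le_trans hdb hk
    rw [div_le_iff₀ hb] at h1
    rw [div_le_iff₀ (by positivity)]
    nlinarith
  have hsum : (Fintype.card S : ℝ) * (φ / (gstar * b)) ≤ ∑ x : S, Mfun g (φ / p x) := by
    calc (Fintype.card S : ℝ) * (φ / (gstar * b)) = ∑ _x : S, φ / (gstar * b) := by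
          rw [Finset.sum_const, Finset.card_univ, nsmul_eq_mul]
      _ ≤ ∑ x : S, Mfun g (φ / p x) := Finset.sum_le_sum fun x _ => hM x
  have hfinal : φ / (gstar * b) ≤ A := by
    have h2 : (1 / (Fintype.card S : ℝ)) * ((Fintype.card S : ℝ) * (φ / (gstar * b)))
        ≤ (1 / (Fintype.card S : ℝ)) * ∑ x : S, Mfun g (φ / p x) := by
      apply mul_le_mul_of_nonneg_left hsum (by positivity)
    rw [one_div, inv_mul_cancel_left₀ hcard.ne'] at h2
    rw [one_div] at havg
    linarith
  rw [div_le_iff₀ (by positivity)] at hfinal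
  nlinarith
end
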